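/- Let b and c be positive integers, and let α be a rational number whose reduced positive denominator is coprime to b·c. Then D_b(D_c(α)) = D_{bc}(α). In particular, the n-fold iterate of D_b equals D_{b^n}; moreover, if α is not a nonpositive integer and b^n ≥ 𝔫_α with b^n ≡ 1 (mod d(α)), then the n-fold iterate of D_b applied to α equals ⟨α⟩. -/

import Mathlib

open Polynomial
open scoped Classical

noncomputable section

/-- The generalized Dwork map `D_b(α)`: the unique rational whose reduced denominator is
coprime to `b` and such that `b·D_b(α) − α ∈ {0, 1, …, b−1}`. -/
def dwork (b : ℕ) (α : ℚ) : ℚ :=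
  if h : ∃ θ : ℚ, Nat.Coprime θ.den b ∧ ∃ k : ℤ, 0 ≤ k ∧ k < (b : ℤ) ∧ (b : ℚ) * θ - α = (k : ℚ)
  then h.choose else 0

/-- `α ∈ ℤ_{≤0}`. -/
def IsNonPosInt (α : ℚ) : Prop := ∃ m : ℤ, m ≤ 0 ∧ α = (m : ℚ)

/-- `α ∈ ℤ_{>0}`. -/
def IsPosInt (α : ℚ) : Prop := ∃ m : ℤ, 0 < m ∧ α = (m : ℚ)

/-- `𝔫_α`. -/
def frakn (α : ℚ) : ℤ := if 0 ≤ α then α.num else |α.num| + 1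

/-- `⟨x⟩`: the fractional part of `x` if `x ∉ ℤ`, and `1` if `x ∈ ℤ`. -/
def cangle (x : ℝ) : ℝ := if ∃ m : ℤ, x = (m : ℝ) then 1 else Int.fract x

/-- Christol order `x ⪯ y`. -/
def cle (x y : ℝ) : Prop := cangle x < cangle y ∨ (cangle x = cangle y ∧ y ≤ x)

/-- The step function `δ_b(r, s, ·)`. -/
def qdelta (b : ℕ) (r s : ℤ) (x : ℝ) : ℤ :=
  if Int.gcd (s / (Nat.gcd (Int.gcd r s) b : ℤ)) (((b / Nat.gcd (Int.gcd r s) b : ℕ)) : ℤ) = 1 then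
    ⌊(Nat.gcd (Int.gcd r s) b : ℝ) * x
        - ((dwork (b / Nat.gcd (Int.gcd r s) b) ((r : ℚ) / (s : ℚ)) : ℚ) : ℝ)
        - ((⌊1 - (r : ℚ) / (s : ℚ)⌋ : ℤ) : ℝ) / ((b / Nat.gcd (Int.gcd r s) b : ℕ) : ℝ)⌋ + 1
  else 0

/-- The Landau-type step function `Δ_b^{𝐫,𝐭}`. -/
def qDeltaFn {v w : ℕ} (b : ℕ) (rr : Fin v → ℤ × ℤ) (tt : Fin w → ℤ × ℤ) (x : ℝ) : ℤ :=
  (∑ i, qdelta b (rr i).1 (rr i).2 x) - (∑ j, qdelta b (tt j).1 (tt j).2 x)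

/-- The q-Pochhammer symbol `(q^r; q^s)_n` for `n ∈ ℕ`, inside `ℚ(q)`. -/
def qPoch (r s : ℤ) (n : ℕ) : RatFunc ℚ :=
  ∏ i ∈ Finset.range n, (1 - RatFunc.X ^ (r + s * (i : ℤ)))

/-- The q-Pochhammer symbol `(q^r; q^s)_n` for `n ∈ ℤ`. -/
def qPochZ (r s : ℤ) (n : ℤ) : RatFunc ℚ :=
  if 0 ≤ n then qPoch r s n.toNat else (qPoch (r - s) (-s) (-n).toNat)⁻¹

/-- Multiplicity of `p` in `g`: the largest `k` with `p^k ∣ g`. -/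
def polyMult (p g : Polynomial ℚ) : ℕ := sSup {k : ℕ | p ^ k ∣ g}

/-- The valuation `v_{φ_b}` on `ℚ(q)` attached to the `b`-th cyclotomic polynomial. -/
def cycVal (b : ℕ) (f : RatFunc ℚ) : ℤ :=
  (polyMult (cyclotomic b ℚ) f.num : ℤ) - (polyMult (cyclotomic b ℚ) f.denom : ℤ)

/-- The image of an integer polynomial in `ℚ(q)`. -/
def polyZ (g : Polynomial ℤ) : RatFunc ℚ :=
  algebraMap (Polynomial ℚ) (RatFunc ℚ) (g.map (Int.castRingHom ℚ))

/-- `f ∈ ℤ[q⁻¹, q]`. -/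
def IsIntLaurent (f : RatFunc ℚ) : Prop :=
  ∃ (m : ℕ) (g : Polynomial ℤ), f * RatFunc.X ^ m = polyZ g

/-- `f ∈ ℤ[q]`. -/
def IsIntPoly (f : RatFunc ℚ) : Prop := ∃ g : Polynomial ℤ, f = polyZ g

/-- The ratio attached to a pair of integers. -/
def ratOf (p : ℤ × ℤ) : ℚ := (p.1 : ℚ) / (p.2 : ℚ)

/-- The q-hypergeometric term `Q_{𝐫,𝐭}(q; n)`, `n ∈ ℕ`. -/
def qHyp {v w : ℕ} (rr : Fin v → ℤ × ℤ) (tt : Fin w → ℤ × ℤ) (n : ℕ) : RatFunc ℚ :=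
  (∏ i, qPoch (rr i).1 (rr i).2 n) / (∏ j, qPoch (tt j).1 (tt j).2 n)

/-- The q-hypergeometric term `Q_{𝐫,𝐭}(q; n)`, `n ∈ ℤ`. -/
def qHypZ {v w : ℕ} (rr : Fin v → ℤ × ℤ) (tt : Fin w → ℤ × ℤ) (n : ℤ) : RatFunc ℚ :=
  (∏ i, qPochZ (rr i).1 (rr i).2 n) / (∏ j, qPochZ (tt j).1 (tt j).2 n)

/-- `c := gcd(r, s, b)`. -/
def cOf (p : ℤ × ℤ) (b : ℕ) : ℕ := Nat.gcd (Int.gcd p.1 p.2) b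

/-- Membership in `V_b` (resp. `W_b`): `gcd(s, b) = gcd(r, s, b)`. -/
def inV (p : ℤ × ℤ) (b : ℕ) : Prop := Nat.gcd p.2.natAbs b = cOf p b

/-- `d_{𝐫,𝐭}`: the lcm of all the `s_i` and `u_j`. -/
def dRT {v w : ℕ} (rr : Fin v → ℤ × ℤ) (tt : Fin w → ℤ × ℤ) : ℕ :=
  Nat.lcm (Finset.univ.lcm fun i => ((rr i).2).natAbs)
    (Finset.univ.lcm fun j => ((tt j).2).natAbs)

/-- `b̃`: the greatest divisor of `b` coprime to `d`. -/
def btilde (d b : ℕ) : ℕ := Nat.findGreatest (fun k => k ∣ b ∧ Nat.Coprime k d) b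

/-- The unique `a ∈ {1,…,d}` with `a·b̃ ≡ 1 (mod d)`. -/
def aOf (d b : ℕ) : ℕ :=
  if h : ∃ a, 1 ≤ a ∧ a ≤ d ∧ (a * btilde d b) % d = 1 % d then h.choose else 1

/-- The representative of `b` modulo `d` lying in `{1,…,d}`. -/
def repMod (d b : ℕ) : ℕ := if b % d = 0 then d else b % d

/-- The jump abscissa `(⟨e·α⟩ + k)/c − ⌊1 − a·α⌋`. -/
def jumpPt (p : ℤ × ℤ) (b : ℕ) (a ei : ℤ) (k : ℕ) : ℝ :=
  (cangle (((ei : ℚ) * ratOf p : ℚ) : ℝ) + (k : ℝ)) / (cOf p b : ℝ)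
    - ((⌊1 - (a : ℚ) * ratOf p⌋ : ℤ) : ℝ)

/-- Number of pairs `(i,k)` with jump abscissa `⪯ x` coming from one pair `p`. -/
def XiCount (p : ℤ × ℤ) (b : ℕ) (a ei : ℤ) (x : ℝ) : ℕ :=
  if inV p b then ((Finset.range (cOf p b)).filter fun k => cle (jumpPt p b a ei k) x).card else 0

/-- The generalized Christol step function `Ξ_{𝐫,𝐭}(b, ·)`, relative to choices `e`, `f`. -/
def Xi {v w : ℕ} (rr : Fin v → ℤ × ℤ) (tt : Fin w → ℤ × ℤ) (b : ℕ)
    (e : Fin v → ℤ) (f : Fin w → ℤ) (x : ℝ) : ℤ :=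
  (∑ i, (XiCount (rr i) b ((aOf (dRT rr tt) b : ℕ) : ℤ) (e i) x : ℤ))
    - (∑ j, (XiCount (tt j) b ((aOf (dRT rr tt) b : ℕ) : ℤ) (f j) x : ℤ))

/-- `ei` is an admissible choice for the pair `p` and `b`: positive with `b·ei ≡ c (mod s)`. -/
def goodChoice (p : ℤ × ℤ) (b : ℕ) (ei : ℤ) : Prop :=
  inV p b → 0 < ei ∧ p.2 ∣ ((b : ℤ) * ei - (cOf p b : ℤ))

end

section DworkAux

/-- Uniqueness: any `θ` satisfying the defining property equals `dwork b α`. -/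
lemma dwork_eq_of (b : ℕ) (hb : 0 < b) (α θ : ℚ) (hθ : Nat.Coprime θ.den b)
    (k : ℤ) (hk0 : 0 ≤ k) (hkb : k < (b : ℤ)) (heq : (b : ℚ) * θ - α = (k : ℚ)) :
    dwork b α = θ := by
  have h : ∃ θ : ℚ, Nat.Coprime θ.den b ∧
      ∃ k : ℤ, 0 ≤ k ∧ k < (b : ℤ) ∧ (b : ℚ) * θ - α = (k : ℚ) :=
    ⟨θ, hθ, k, hk0, hkb, heq⟩
  rw [dwork, dif_pos h]
  obtain ⟨hθ', k', hk0', hkb', heq'⟩ := h.choose_spec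
  set θ' := h.choose with hθ'def
  -- b * (θ' - θ) = k' - k
  have hsub : (b : ℚ) * (θ' - θ) = ((k' - k : ℤ) : ℚ) := by
    push_cast
    linarith [heq, heq']
  have hbne : ((b : ℤ) : ℚ) ≠ 0 := by
    exact_mod_cast (Nat.cast_ne_zero (R := ℚ)).mpr hb.ne'
  have hdiv : θ' - θ = Rat.divInt (k' - k) (b : ℤ) := by
    rw [Rat.divInt_eq_div]
    field_simp
    push_cast at hsub ⊢
    linarith [hsub]
  have hddvd : (((θ' - θ).den : ℤ)) ∣ (b : ℤ) := by
    rw [hdiv]; exact Rat.den_dvd _ _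
  have hddvd' : (θ' - θ).den ∣ b := by exact_mod_cast hddvd
  have hdcop : Nat.Coprime (θ' - θ).den b := by
    have h1 : (θ' - θ).den ∣ θ'.den * θ.den := by
      have := Rat.add_den_dvd θ' (-θ)
      simpa [sub_eq_add_neg, Rat.den_neg_eq_den] using this
    exact Nat.Coprime.coprime_dvd_left h1 (hθ'.mul hθ)
  have hd1 : (θ' - θ).den = 1 := hdcop.eq_one_of_dvd hddvd'
  have hint : ((θ' - θ).num : ℚ) = θ' - θ := (Rat.den_eq_one_iff _).mp hd1
  set m := (θ' - θ).num with hm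
  have hbm : (b : ℤ) * m = k' - k := by
    have : ((b : ℤ) * m : ℚ) = ((k' - k : ℤ) : ℚ) := by
      push_cast
      rw [hint]
      push_cast at hsub
      linarith [hsub]
    exact_mod_cast this
  have hm0 : m = 0 := by
    by_contra hne
    have h1 : 1 ≤ |m| := Int.one_le_abs (by omega)
    have : (b : ℤ) ≤ |k' - k| := by
      calc (b : ℤ) = (b : ℤ) * 1 := by ring
      _ ≤ (b : ℤ) * |m| := by
          apply mul_le_mul_of_nonneg_left h1 (by exact_mod_cast hb.le)
      _ = |(b : ℤ) * m| := by
          rw [abs_mul, abs_of_nonneg (by exact_mod_cast hb.le : (0:ℤ) ≤ (b:ℤ))]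
      _ = |k' - k| := by rw [hbm]
    have h2 : |k' - k| < (b : ℤ) := abs_sub_lt_iff.mpr ⟨by omega, by omega⟩
    linarith
  have : θ' - θ = 0 := by rw [← hint, hm0]; norm_num
  linarith [this]

/-- Existence: `dwork b α` satisfies its defining property when `den α` is coprime to `b`. -/
lemma dwork_spec (b : ℕ) (hb : 0 < b) (α : ℚ) (hα : Nat.Coprime α.den b) :
    Nat.Coprime (dwork b α).den b ∧
      ∃ k : ℤ, 0 ≤ k ∧ k < (b : ℤ) ∧ (b : ℚ) * dwork b α - α = (k : ℚ) := by
  have hcop : IsCoprime ((α.den : ℤ)) ((b : ℕ) : ℤ) := by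
    rw [Nat.isCoprime_iff_coprime]; exact hα
  obtain ⟨u, v, huv⟩ := hcop
  set N := α.num with hN
  set D := (α.den : ℤ) with hD
  set x : ℤ := -N * u with hx
  set k : ℤ := x % (b : ℤ) with hk
  have hbpos : (0 : ℤ) < (b : ℤ) := by exact_mod_cast hb
  have hk0 : 0 ≤ k := Int.emod_nonneg x (by omega)
  have hkb : k < (b : ℤ) := Int.emod_lt_of_pos x hbpos
  have hdvd : (b : ℤ) ∣ N + k * D := by
    have h1 : (b : ℤ) ∣ k - x := by
      rw [hk, Int.emod_def]; exact ⟨-(x / b), by ring⟩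
    have h2 : N + x * D = N * (1 - u * D) := by rw [hx]; ring
    have h3 : (1 : ℤ) - u * D = v * b := by linarith [huv]
    have h4 : (b : ℤ) ∣ N + x * D := by rw [h2, h3]; exact ⟨N * v, by ring⟩
    have : N + k * D = (N + x * D) + (k - x) * D := by ring
    rw [this]
    exact dvd_add h4 (Dvd.dvd.mul_right h1 D)
  obtain ⟨j, hj⟩ := hdvd
  set θ : ℚ := (j : ℚ) / (D : ℚ) with hθ
  have hDpos : (0 : ℤ) < D := by rw [hD]; exact_mod_cast α.pos
  have hDne : ((D : ℤ) : ℚ) ≠ 0 := by exact_mod_cast hDpos.ne'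
  have hden : Nat.Coprime θ.den b := by
    have h1 : ((θ.den : ℤ)) ∣ D := by
      have : θ = Rat.divInt j D := by rw [hθ, Rat.divInt_eq_div]
      rw [this]; exact Rat.den_dvd _ _
    have h2 : θ.den ∣ α.den := by
      have := Int.natAbs_dvd_natAbs.mpr h1
      simpa [hD] using this
    exact Nat.Coprime.coprime_dvd_left h2 hα
  have heq : (b : ℚ) * θ - α = (k : ℚ) := by
    have hαeq : α = (N : ℚ) / (D : ℚ) := by
      rw [hN, hD]; exact_mod_cast (Rat.num_div_den α).symm
    rw [hθ, hαeq]
    have hjq : ((b : ℤ) : ℚ) * (j : ℚ) = (N : ℚ) + (k : ℚ) * (D : ℚ) := by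
      exact_mod_cast hj.symm
    field_simp
    push_cast at hjq ⊢
    linarith [hjq]
  rw [dwork_eq_of b hb α θ hden k hk0 hkb heq]
  exact ⟨hden, k, hk0, hkb, heq⟩

/-- Composition rule (first part). -/
lemma dwork_comp_aux (b c : ℕ) (hb : 0 < b) (hc : 0 < c) (α : ℚ)
    (hα : Nat.Coprime α.den (b * c)) :
    dwork b (dwork c α) = dwork (b * c) α := by
  have hbc : 0 < b * c := Nat.mul_pos hb hc
  obtain ⟨hθden, k, hk0, hkbc, heq⟩ := dwork_spec (b * c) hbc α hα
  set θ := dwork (b * c) α with hθdef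
  have hcpos : (0 : ℤ) < (c : ℤ) := by exact_mod_cast hc
  set k₀ : ℤ := k % (c : ℤ) with hk₀
  set k₁ : ℤ := k / (c : ℤ) with hk₁
  have hk₀0 : 0 ≤ k₀ := Int.emod_nonneg k (by omega)
  have hk₀c : k₀ < (c : ℤ) := Int.emod_lt_of_pos k hcpos
  have hk₁0 : 0 ≤ k₁ := Int.ediv_nonneg hk0 hcpos.le
  have hk₁b : k₁ < (b : ℤ) := by
    rw [hk₁, Int.ediv_lt_iff_lt_mul hcpos]
    push_cast at hkbc ⊢
    linarith [hkbc]
  have hksplit : (c : ℤ) * k₁ + k₀ = k := Int.mul_ediv_add_emod k (c : ℤ)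
  set φ : ℚ := (b : ℚ) * θ - (k₁ : ℚ) with hφ
  have hφden : Nat.Coprime φ.den c := by
    have h1 : φ.den ∣ ((b : ℚ) * θ).den * ((-k₁ : ℤ) : ℚ).den := by
      have := Rat.add_den_dvd ((b : ℚ) * θ) ((-k₁ : ℤ) : ℚ)
      simpa [hφ, sub_eq_add_neg] using this
    have h2 : φ.den ∣ ((b : ℚ) * θ).den := by simpa using h1
    have h3 : ((b : ℚ) * θ).den ∣ ((b : ℚ)).den * θ.den := Rat.mul_den_dvd _ _
    have h4 : φ.den ∣ θ.den := by
      refine dvd_trans h2 ?_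
      simpa using h3
    have hθc : Nat.Coprime θ.den c :=
      Nat.Coprime.coprime_dvd_right (Dvd.intro_left b rfl) hθden
    exact Nat.Coprime.coprime_dvd_left h4 hθc
  have hφeq : (c : ℚ) * φ - α = (k₀ : ℚ) := by
    have hksq : ((c : ℕ) : ℚ) * (k₁ : ℚ) + (k₀ : ℚ) = (k : ℚ) := by exact_mod_cast hksplit
    push_cast at heq hksq
    rw [hφ]
    push_cast
    nlinarith [heq, hksq]
  have h5 : dwork c α = φ := dwork_eq_of c hc α φ hφden k₀ hk₀0 hk₀c hφeq
  have hθb : Nat.Coprime θ.den b :=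
    Nat.Coprime.coprime_dvd_right (Dvd.intro c rfl) hθden
  have h6 : dwork b φ = θ := by
    apply dwork_eq_of b hb φ θ hθb k₁ hk₁0 hk₁b
    rw [hφ]; push_cast; ring
  rw [h5, h6]

/-- Iterate rule (second part). -/
lemma dwork_iterate (b : ℕ) (hb : 0 < b) :
    ∀ (n : ℕ) (β : ℚ), Nat.Coprime β.den b → (dwork b)^[n] β = dwork (b ^ n) β := by
  intro n
  induction n with
  | zero =>
    intro β hβ
    simp only [Function.iterate_zero, id_eq, pow_zero]
    exact (dwork_eq_of 1 one_pos β β (Nat.coprime_one_right _) 0 le_rfl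
      (by norm_num) (by push_cast; ring)).symm
  | succ n ih =>
    intro β hβ
    rw [Function.iterate_succ_apply, ih (dwork b β) (dwork_spec b hb β hβ).1]
    have hβ' : Nat.Coprime β.den (b ^ n * b) := by
      have : Nat.Coprime β.den (b ^ (n + 1)) := hβ.pow_right _
      rwa [pow_succ] at this
    rw [dwork_comp_aux (b ^ n) b (Nat.pow_pos hb) hb β hβ', ← pow_succ]

end DworkAux

/-- composition rule for generalized Dwork maps. -/
theorem dwork_comp (b c : ℕ) (hb : 0 < b) (hc : 0 < c) (α : ℚ)
    (hα : Nat.Coprime α.den (b * c)) :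
    dwork b (dwork c α) = dwork (b * c) α ∧
      (∀ (n : ℕ) (β : ℚ), Nat.Coprime β.den b → (dwork b)^[n] β = dwork (b ^ n) β) ∧
      (∀ n : ℕ, ¬ IsNonPosInt α → frakn α ≤ (b : ℤ) ^ n →
        (b ^ n) % α.den = 1 % α.den → (((dwork b)^[n] α : ℚ) : ℝ) = cangle (α : ℝ)) := by
  refine ⟨dwork_comp_aux b c hb hc α hα, dwork_iterate b hb, ?_⟩
  intro n hnp hfra hmod
  have hαb : Nat.Coprime α.den b := Nat.Coprime.coprime_dvd_right (Dvd.intro c rfl) hα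
  have hαbn : Nat.Coprime α.den (b ^ n) := hαb.pow_right _
  have hBpos : 0 < b ^ n := Nat.pow_pos hb
  rw [dwork_iterate b hb n α hαb]
  have hBZ : ((b ^ n : ℕ) : ℤ) = (b : ℤ) ^ n := by push_cast; ring
  have hB1 : (1 : ℤ) ≤ ((b ^ n : ℕ) : ℤ) := by exact_mod_cast hBpos
  by_cases hint : α.den = 1
  · -- α is a positive integer
    have hαnum : ((α.num : ℚ)) = α := (Rat.den_eq_one_iff _).mp hint
    have hnumpos : 0 < α.num := by
      by_contra hle
      exact hnp ⟨α.num, by omega, hαnum.symm⟩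
    have hα0 : 0 ≤ α := by
      rw [← hαnum]; exact_mod_cast hnumpos.le
    have hfra' : α.num ≤ ((b ^ n : ℕ) : ℤ) := by
      rw [hBZ]; rwa [frakn, if_pos hα0] at hfra
    have h1 : dwork (b ^ n) α = 1 := by
      apply dwork_eq_of (b ^ n) hBpos α 1 (by simp) (((b ^ n : ℕ) : ℤ) - α.num)
        (by omega) (by omega)
      push_cast
      linarith [hαnum]
    rw [h1]
    have hex : ∃ m : ℤ, (α : ℝ) = (m : ℝ) := ⟨α.num, by exact_mod_cast hαnum.symm⟩
    rw [cangle, if_pos hex]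
    norm_num
  · -- α is not an integer
    set D : ℤ := (α.den : ℤ) with hD
    set N : ℤ := α.num with hN
    set f : ℤ := ⌊α⌋ with hf
    set F : ℤ := N - D * f with hF
    have hDpos : (0 : ℤ) < D := by rw [hD]; exact_mod_cast α.pos
    have hDα : (D : ℚ) * α = (N : ℚ) := by
      rw [hD, hN]
      rw [mul_comm]
      exact_mod_cast Rat.mul_den_eq_num α
    have hfle : (f : ℚ) ≤ α := Int.floor_le α
    have hflt : α < (f : ℚ) + 1 := Int.lt_floor_add_one α
    have hαnef : α ≠ (f : ℚ) := by
      intro h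
      apply hint
      rw [h]
      exact Rat.den_intCast f
    have hFq : (F : ℚ) = (D : ℚ) * (α - (f : ℚ)) := by
      have : ((N - D * f : ℤ) : ℚ) = (D : ℚ) * (α - (f : ℚ)) := by
        push_cast
        rw [mul_sub, hDα]
      rw [hF]
      exact this
    have hF1 : 1 ≤ F := by
      have h1 : (0 : ℚ) < α - (f : ℚ) := lt_of_le_of_ne (by linarith) (by
        intro h; exact hαnef (by linarith))
      have h2 : (0 : ℚ) < (F : ℚ) := by
        rw [hFq]
        apply mul_pos (by exact_mod_cast hDpos) h1
      exact_mod_cast h2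
    have hFD : F ≤ D - 1 := by
      have h2 : (F : ℚ) < (D : ℚ) := by
        rw [hFq]
        have h1 : α - (f : ℚ) < 1 := by linarith
        nlinarith [show (0:ℚ) < (D:ℚ) from by exact_mod_cast hDpos]
      have : F < D := by exact_mod_cast h2
      omega
    -- D ∣ B - 1
    have hdvd : D ∣ ((b ^ n : ℕ) : ℤ) - 1 := by
      have h1 : (α.den : ℤ) ∣ (1 : ℤ) - (b ^ n : ℕ) := (Nat.modEq_iff_dvd).mp hmod
      have h2 : (α.den : ℤ) ∣ -((1 : ℤ) - (b ^ n : ℕ)) := dvd_neg.mpr h1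
      rw [neg_sub] at h2
      rw [hD]
      exact h2
    obtain ⟨m, hm⟩ := hdvd
    set B : ℤ := ((b ^ n : ℕ) : ℤ) with hBdef
    set k : ℤ := m * N - B * f with hk
    have hDk : D * k = B * F - N := by
      rw [hk, hF]
      linear_combination (-N) * hm
    have hk0 : 0 ≤ k := by
      have h1 : 0 ≤ D * k := by
        rw [hDk]
        rcases le_or_gt N 0 with hle | hlt
        · have h2 : (1 : ℤ) * 1 ≤ B * F := mul_le_mul hB1 hF1 (by norm_num) (by linarith)
          linarith
        · have hα0 : 0 ≤ α := by
            rw [← Rat.num_nonneg] at *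
            exact hlt.le
          have hNB : N ≤ B := by
            rw [frakn, if_pos hα0] at hfra
            show α.num ≤ ((b ^ n : ℕ) : ℤ)
            push_cast
            exact hfra
          have h2 : B * 1 ≤ B * F := mul_le_mul_of_nonneg_left hF1 (by linarith)
          linarith
      exact le_of_mul_le_mul_left (by linarith : D * 0 ≤ D * k) hDpos
    have hkB : k < B := by
      have h1 : D * k < D * B := by
        rw [hDk]
        rcases le_or_gt 0 N with hle | hlt
        · nlinarith
        · have hα0 : ¬ 0 ≤ α := by
            rw [← Rat.num_nonneg]; omega
          have hNB : -N + 1 ≤ B := by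
            rw [frakn, if_neg hα0] at hfra
            show -α.num + 1 ≤ ((b ^ n : ℕ) : ℤ)
            have hcast : ((b ^ n : ℕ) : ℤ) = (b : ℤ) ^ n := by push_cast; ring
            rw [hcast]
            linarith [neg_abs_le α.num, hfra]
          have hDF : 1 ≤ D - F := by omega
          have h2 : B * 1 ≤ B * (D - F) := mul_le_mul_of_nonneg_left hDF (by linarith)
          linarith
      exact lt_of_mul_lt_mul_left h1 hDpos.le
    set θ : ℚ := α - (f : ℚ) with hθ
    have hθden : Nat.Coprime θ.den (b ^ n) := by
      have h1 : θ.den ∣ α.den * ((-f : ℤ) : ℚ).den := by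
        have := Rat.add_den_dvd α ((-f : ℤ) : ℚ)
        simpa [hθ, sub_eq_add_neg] using this
      have h2 : θ.den ∣ α.den := by simpa [Rat.den_intCast] using h1
      exact Nat.Coprime.coprime_dvd_left h2 hαbn
    have heq : ((b ^ n : ℕ) : ℚ) * θ - α = (k : ℚ) := by
      have hDne : (D : ℚ) ≠ 0 := by exact_mod_cast hDpos.ne'
      have hDkq : (D : ℚ) * (k : ℚ) = (B : ℚ) * (F : ℚ) - (N : ℚ) := by exact_mod_cast hDk
      have hBq : ((b ^ n : ℕ) : ℚ) = (B : ℚ) := by rw [hBdef]; push_cast; ring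
      rw [hθ, hBq]
      have hBm : (B : ℚ) - 1 = (D : ℚ) * (m : ℚ) := by exact_mod_cast hm
      have h3 : (D : ℚ) * ((B : ℚ) * (α - (f : ℚ)) - α) = (D : ℚ) * (k : ℚ) := by
        rw [hDkq, hFq]
        linear_combination -hDα
      have := mul_left_cancel₀ hDne h3
      linarith [this]
    have hdw : dwork (b ^ n) α = θ :=
      dwork_eq_of (b ^ n) hBpos α θ hθden k hk0 (by rw [← hBdef]; exact hkB) heq
    rw [hdw]
    have hnex : ¬ ∃ m : ℤ, (α : ℝ) = (m : ℝ) := by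
      rintro ⟨j, hj⟩
      apply hint
      have : α = (j : ℚ) := by exact_mod_cast hj
      rw [this]
      exact Rat.den_intCast j
    rw [cangle, if_neg hnex, Int.fract]
    rw [hθ]
    push_cast
    rw [Rat.floor_cast]
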